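/- For any unit vector v ∈ D2, the operator P_v satisfies P_v v = (1/2)λ1η·v (so v is an eigenvector with eigenvalue σ = (1/2)λ1η), and every eigenvalue of P_v restricted to the orthogonal complement of v in D2 equals either 0 or τ = (1/4)η(η + λ1/2). -/
import Mathlib


open scoped RealInnerProductSpace
open Module Submodule

noncomputable section

variable {V : Type*} [NormedAddCommGroup V] [InnerProductSpace ℝ V]

/-- The curvature-type operator built from `ε` and the difference tensor `K`:
`R(X,Y)Z = ε(⟨Y,Z⟩X − ⟨X,Z⟩Y) − K(X,K(Y,Z)) + K(Y,K(X,Z))`. -/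
def Rc (ε : ℝ) (K : V →ₗ[ℝ] V →ₗ[ℝ] V) (X Y Z : V) : V :=
  ε • (⟪Y, Z⟫ • X - ⟪X, Z⟫ • Y) - K X (K Y Z) + K Y (K X Z)

/-- The bilinear map `L(v₁,v₂) = K(v₁,v₂) − (λ₁/2)⟨v₁,v₂⟩ e₁`. -/
def Lop (lam1 : ℝ) (e1 : V) (K : V →ₗ[ℝ] V →ₗ[ℝ] V) (v1 v2 : V) : V :=
  K v1 v2 - (lam1 / 2 * ⟪v1, v2⟫) • e1

/-- The distribution `D₂ = {v : v ⟂ e₁, K(e₁,v) = (λ₁/2)v}`. -/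
def D2s (lam1 : ℝ) (e1 : V) (K : V →ₗ[ℝ] V →ₗ[ℝ] V) : Submodule ℝ V :=
  (ℝ ∙ e1)ᗮ ⊓ Module.End.eigenspace (K e1) (lam1 / 2)

/-- The distribution `D₃ = {w : w ⟂ e₁, K(e₁,w) = μw}`. -/
def D3s (mu : ℝ) (e1 : V) (K : V →ₗ[ℝ] V →ₗ[ℝ] V) : Submodule ℝ V :=
  (ℝ ∙ e1)ᗮ ⊓ Module.End.eigenspace (K e1) mu

/-- The operator `P_v(ṽ) = K(v, L(v,ṽ))`, as a linear endomorphism of `V`. -/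
def Pop (lam1 : ℝ) (e1 : V) (K : V →ₗ[ℝ] V →ₗ[ℝ] V) (v : V) : V →ₗ[ℝ] V :=
  (K v) ∘ₗ (K v - (lam1 / 2) •
    ((LinearMap.toSpanSingleton ℝ V e1) ∘ₗ (innerSL ℝ v).toLinearMap))

/-- The eigenspace `V_v(c)` of `P_v` within the orthogonal complement of `v` in `D₂`. -/
def Vvs (lam1 c : ℝ) (e1 : V) (K : V →ₗ[ℝ] V →ₗ[ℝ] V) (v : V) : Submodule ℝ V :=
  D2s lam1 e1 K ⊓ (ℝ ∙ v)ᗮ ⊓ Module.End.eigenspace (Pop lam1 e1 K v) c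

private lemma max_eigen {V : Type*} [NormedAddCommGroup V] [InnerProductSpace ℝ V]
    (K : V →ₗ[ℝ] V →ₗ[ℝ] V)
    (hKsymm : ∀ X Y : V, K X Y = K Y X)
    (hKcub : ∀ X Y Z : V, ⟪K X Y, Z⟫ = ⟪K X Z, Y⟫)
    (e1 : V) (he1 : ‖e1‖ = 1) (lam1 : ℝ)
    (hlam1 : lam1 = ⟪K e1 e1, e1⟫)
    (hmax : ∀ u : V, ‖u‖ = 1 → ⟪K u u, u⟫ ≤ lam1) :
    K e1 e1 = lam1 • e1 := by
  have he1i : ⟪e1, e1⟫ = 1 := by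
    rw [real_inner_self_eq_norm_sq, he1]; norm_num
  have key : ∀ x : V, ⟪e1, x⟫ = 0 → ‖x‖ = 1 → ⟪K e1 e1, x⟫ = 0 := by
    intro x hx hxn
    have hxx : ⟪x, x⟫ = 1 := by rw [real_inner_self_eq_norm_sq, hxn]; norm_num
    have hxe : ⟪x, e1⟫ = 0 := by rw [real_inner_comm]; exact hx
    have hcub1 : ⟪K e1 x, e1⟫ = ⟪K e1 e1, x⟫ := hKcub e1 x e1
    have hcub2 : ⟪K x x, e1⟫ = ⟪K e1 x, x⟫ := by
      rw [hKcub x x e1, hKsymm x e1]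
    set a := ⟪K e1 e1, x⟫ with ha
    set b := ⟪K e1 x, x⟫ with hb
    set d0 := ⟪K x x, x⟫ with hd0
    set g : ℝ → ℝ := fun t => lam1 * Real.cos t ^ 3 + (3*a) * (Real.cos t ^ 2 * Real.sin t)
      + (3*b) * (Real.cos t * Real.sin t ^ 2) + d0 * Real.sin t ^ 3 with hg
    have hgle : ∀ t, g t ≤ lam1 := by
      intro t
      have hnorm : ‖Real.cos t • e1 + Real.sin t • x‖ = 1 := by
        have h2 : ⟪Real.cos t • e1 + Real.sin t • x, Real.cos t • e1 + Real.sin t • x⟫ = 1 := by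
          simp only [inner_add_left, inner_add_right, real_inner_smul_left, real_inner_smul_right,
            he1i, hxx, hx, hxe]
          nlinarith [Real.sin_sq_add_cos_sq t]
        have h3 : ‖Real.cos t • e1 + Real.sin t • x‖ ^ 2 = 1 := by
          rw [← real_inner_self_eq_norm_sq]; exact h2
        nlinarith [norm_nonneg (Real.cos t • e1 + Real.sin t • x)]
      have hle := hmax _ hnorm
      have heq : g t = ⟪K (Real.cos t • e1 + Real.sin t • x) (Real.cos t • e1 + Real.sin t • x),
          Real.cos t • e1 + Real.sin t • x⟫ := by
        simp only [map_add, map_smul, LinearMap.add_apply, LinearMap.smul_apply,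
          inner_add_left, inner_add_right, real_inner_smul_left, real_inner_smul_right,
          hKsymm x e1, hcub1, hcub2, ← ha, ← hb, ← hd0, ← hlam1, hg]
        ring
      rw [heq]; exact hle
    have hloc : IsLocalMax g 0 := by
      have hg0 : g 0 = lam1 := by simp [hg]
      exact Filter.Eventually.of_forall fun t => by rw [hg0]; exact hgle t
    have hder := ((((((Real.hasDerivAt_cos 0).pow 3).const_mul lam1).add
        ((((Real.hasDerivAt_cos 0).pow 2).mul (Real.hasDerivAt_sin 0)).const_mul (3*a))).add
        (((Real.hasDerivAt_cos 0).mul ((Real.hasDerivAt_sin 0).pow 2)).const_mul (3*b))).add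
        (((Real.hasDerivAt_sin 0).pow 3).const_mul d0))
    have h0 := hloc.hasDerivAt_eq_zero hder
    simp only [Real.sin_zero, Real.cos_zero] at h0
    norm_num at h0
    linarith
  have key' : ∀ x : V, ⟪e1, x⟫ = 0 → ⟪K e1 e1, x⟫ = 0 := by
    intro x hx
    rcases eq_or_ne x 0 with rfl | hx0
    · simp
    · have hn : ‖x‖ ≠ 0 := norm_ne_zero_iff.mpr hx0
      have := key (‖x‖⁻¹ • x) (by rw [real_inner_smul_right, hx, mul_zero])
        (by rw [norm_smul, norm_inv, norm_norm, inv_mul_cancel₀ hn])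
      rw [real_inner_smul_right] at this
      rcases mul_eq_zero.mp this with h | h
      · exact absurd h (inv_ne_zero hn)
      · exact h
  have hd : ⟪e1, K e1 e1 - lam1 • e1⟫ = 0 := by
    rw [inner_sub_right, real_inner_smul_right, he1i, real_inner_comm, ← hlam1]; ring
  have hz : ⟪K e1 e1 - lam1 • e1, K e1 e1 - lam1 • e1⟫ = 0 := by
    rw [inner_sub_left, key' _ hd, real_inner_smul_left, hd]; ring
  have := inner_self_eq_zero.mp hz
  rw [sub_eq_zero] at this; exact this

/-- Lemma 4.8: for a unit vector `v ∈ D₂`, `P_v v = (λ₁η/2)v`, and on the orthogonal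
complement of `v` in `D₂` the only possible eigenvalues of `P_v` are `0` and `τ`. -/
theorem stmt_10 {V : Type*} [NormedAddCommGroup V] [InnerProductSpace ℝ V]
    (n m : ℕ) (hn : finrank ℝ V = n) (hn2 : 2 ≤ n)
    (ε : ℝ) (hε : ε = 1 ∨ ε = -1)
    (K : V →ₗ[ℝ] V →ₗ[ℝ] V)
    (hKsymm : ∀ X Y : V, K X Y = K Y X)
    (hKcub : ∀ X Y Z : V, ⟪K X Y, Z⟫ = ⟪K X Z, Y⟫)
    (hpar : ∀ X Y Z U : V,
      Rc ε K X Y (K Z U) = K (Rc ε K X Y Z) U + K Z (Rc ε K X Y U))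
    (e1 : V) (he1 : ‖e1‖ = 1)
    (lam1 η μ τ : ℝ)
    (hlam1 : lam1 = ⟪K e1 e1, e1⟫) (hlam1pos : 0 < lam1)
    (hmax : ∀ u : V, ‖u‖ = 1 → ⟪K u u, u⟫ ≤ lam1)
    (hdisc : 0 < lam1 ^ 2 - 4 * ε)
    (hη : η = Real.sqrt (lam1 ^ 2 - 4 * ε) / 2)
    (hμ : μ = (lam1 - Real.sqrt (lam1 ^ 2 - 4 * ε)) / 2)
    (hτ : τ = η * (η + lam1 / 2) / 4)
    (hm2 : 2 ≤ m) (hmn : m ≤ n - 1)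
    (hdimD2 : finrank ℝ (D2s lam1 e1 K) = m - 1)
    (hsplit : (ℝ ∙ e1) ⊔ D2s lam1 e1 K ⊔ D3s μ e1 K = ⊤)
    (hLD3 : ∀ v1 ∈ D2s lam1 e1 K, ∀ v2 ∈ D2s lam1 e1 K,
      Lop lam1 e1 K v1 v2 ∈ D3s μ e1 K)
    (hKD2 : ∀ v ∈ D2s lam1 e1 K, ∀ w ∈ D3s μ e1 K, K v w ∈ D2s lam1 e1 K)
    (v : V) (hv : v ∈ D2s lam1 e1 K) (hvu : ‖v‖ = 1) :
    K v (Lop lam1 e1 K v v) = (lam1 * η / 2) • v ∧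
    (∀ (c : ℝ) (w : V), w ∈ D2s lam1 e1 K → ⟪v, w⟫ = 0 → w ≠ 0 →
      K v (Lop lam1 e1 K v w) = c • w → c = 0 ∨ c = τ) := by
  have hK11 : K e1 e1 = lam1 • e1 := max_eigen K hKsymm hKcub e1 he1 lam1 hlam1 hmax
  have hsroot : Real.sqrt (lam1 ^ 2 - 4 * ε) = 2 * η := by rw [hη]; ring
  have hsq : (2 * η) ^ 2 = lam1 ^ 2 - 4 * ε := by rw [← hsroot]; exact Real.sq_sqrt hdisc.le
  have hηpos : 0 < η := by
    rw [hη]; have := Real.sqrt_pos.mpr hdisc; linarith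
  have hεval : ε = lam1 ^ 2 / 4 - η ^ 2 := by nlinarith [hsq]
  have hμval : μ = lam1 / 2 - η := by rw [hμ, hsroot]; ring
  have he1i : ⟪e1, e1⟫ = 1 := by rw [real_inner_self_eq_norm_sq, he1]; norm_num
  have hD2 : ∀ a, a ∈ D2s lam1 e1 K → ⟪e1, a⟫ = 0 ∧ K e1 a = (lam1 / 2) • a := by
    intro a ha
    simp only [D2s, Submodule.mem_inf] at ha
    exact ⟨((Submodule.mem_orthogonal _ _).mp ha.1) e1 (Submodule.mem_span_singleton_self e1),
      Module.End.mem_eigenspace_iff.mp ha.2⟩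
  have hD3 : ∀ a, a ∈ D3s μ e1 K → ⟪e1, a⟫ = 0 ∧ K e1 a = μ • a := by
    intro a ha
    simp only [D3s, Submodule.mem_inf] at ha
    exact ⟨((Submodule.mem_orthogonal _ _).mp ha.1) e1 (Submodule.mem_span_singleton_self e1),
      Module.End.mem_eigenspace_iff.mp ha.2⟩
  have horth : ∀ a, a ∈ D2s lam1 e1 K → ∀ b, b ∈ D3s μ e1 K → ⟪a, b⟫ = 0 := by
    intro a ha b hb
    obtain ⟨-, h2⟩ := hD2 a ha
    obtain ⟨-, h3⟩ := hD3 b hb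
    have hsym : ⟪K e1 a, b⟫ = ⟪a, K e1 b⟫ := by
      rw [hKcub e1 a b, real_inner_comm]
    rw [h2, h3, real_inner_smul_left, real_inner_smul_right] at hsym
    have h4 : (lam1 / 2 - μ) * ⟪a, b⟫ = 0 := by linarith
    have hne : lam1 / 2 - μ ≠ 0 := by rw [hμval]; intro h; nlinarith
    rcases mul_eq_zero.mp h4 with h | h
    · exact absurd h hne
    · exact h
  obtain ⟨hv1, hK1v⟩ := hD2 v hv
  have hvv : ⟪v, v⟫ = 1 := by rw [real_inner_self_eq_norm_sq, hvu]; norm_num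
  have hv1' : ⟪v, e1⟫ = 0 := by rw [real_inner_comm]; exact hv1
  have hKv1 : K v e1 = (lam1 / 2) • v := by rw [hKsymm v e1]; exact hK1v
  have hw0mem := hLD3 v hv v hv
  set w0 : V := Lop lam1 e1 K v v with hw0def
  obtain ⟨hw01, hK1w0⟩ := hD3 w0 hw0mem
  have hKvv : K v v = (lam1 / 2) • e1 + w0 := by
    rw [hw0def]; simp only [Lop, hvv, mul_one]; module
  have hw0v : ⟪v, w0⟫ = 0 := horth v hv w0 hw0mem
  have hw0v' : ⟪w0, v⟫ = 0 := by rw [real_inner_comm]; exact hw0v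
  have hw01' : ⟪w0, e1⟫ = 0 := by rw [real_inner_comm]; exact hw01
  have hKw01 : K w0 e1 = μ • w0 := by rw [hKsymm w0 e1]; exact hK1w0
  have hKw0v : K w0 v = K v w0 := hKsymm w0 v
  obtain ⟨hp1e, hK1p⟩ := hD2 (K v w0) (hKD2 v hv w0 hw0mem)
  -- Part 1
  have hmain := hpar e1 v v v
  simp only [Rc] at hmain
  simp only [hKvv, map_add, map_sub, map_smul, LinearMap.add_apply, LinearMap.sub_apply,
    LinearMap.smul_apply, inner_add_right, inner_add_left, inner_sub_left, inner_sub_right,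
    real_inner_smul_left, real_inner_smul_right, hK11, hK1v, hKv1, hK1w0, hKw01, hKw0v, hK1p,
    he1i, hv1, hv1', hvv, hw01, hw01', hw0v, hw0v', smul_add, smul_sub, smul_smul,
    mul_one, mul_zero, zero_mul, smul_zero, zero_smul, add_zero, zero_add, sub_zero, map_zero, LinearMap.zero_apply] at hmain
  rw [hεval, hμval] at hmain
  have h3 : (3 * η) • (K v w0) = (3 * lam1 * η ^ 2 / 2) • v := by
    linear_combination (norm := module) -hmain
  have hKvw0 : K v w0 = (lam1 * η / 2) • v := by
    have h4 : (3 * η) • (K v w0) = (3 * η) • ((lam1 * η / 2) • v) := by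
      rw [h3, smul_smul]; congr 1; ring
    exact smul_right_injective V (ne_of_gt (by linarith)) h4
  refine ⟨hKvw0, ?_⟩
  intro c w hw hvw hwne hc
  obtain ⟨hw1, hK1w⟩ := hD2 w hw
  have hw1' : ⟪w, e1⟫ = 0 := by rw [real_inner_comm]; exact hw1
  have hvw' : ⟪w, v⟫ = 0 := by rw [real_inner_comm]; exact hvw
  have hKw1 : K w e1 = (lam1 / 2) • w := by rw [hKsymm w e1]; exact hK1w
  have hKwv : K w v = K v w := hKsymm w v
  have humem := hLD3 v hv w hw
  have hLvw : Lop lam1 e1 K v w = K v w := by simp [Lop, hvw]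
  rw [hLvw] at hc humem
  obtain ⟨hu1, hK1u⟩ := hD3 (K v w) humem
  have hu1' : ⟪K v w, e1⟫ = 0 := by rw [real_inner_comm]; exact hu1
  have hvu0 : ⟪v, K v w⟫ = 0 := horth v hv _ humem
  have hvu0' : ⟪K v w, v⟫ = 0 := by rw [real_inner_comm]; exact hvu0
  have hKu1 : K (K v w) e1 = μ • (K v w) := by rw [hKsymm]; exact hK1u
  have hww0 : ⟪w, w0⟫ = 0 := horth w hw w0 hw0mem
  have hww0' : ⟪w0, w⟫ = 0 := by rw [real_inner_comm]; exact hww0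
  have hKww0 : K w w0 = K w0 w := hKsymm w w0
  -- step (*)
  have hstar := hpar e1 v v w
  simp only [Rc] at hstar
  simp only [hKvv, map_add, map_sub, map_smul, LinearMap.add_apply, LinearMap.sub_apply,
    LinearMap.smul_apply, inner_add_right, inner_add_left, inner_sub_left, inner_sub_right,
    real_inner_smul_left, real_inner_smul_right, hK11, hK1v, hKv1, hK1w0, hKw01, hKw0v,
    hK1w, hKw1, hKwv, hc, hK1u, hKu1, hKvw0, hKww0,
    he1i, hv1, hv1', hvv, hw01, hw01', hw0v, hw0v', hw1, hw1', hvw, hvw', hu1, hu1',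
    hvu0, hvu0', hww0, hww0', smul_add, smul_sub, smul_smul,
    mul_one, mul_zero, zero_mul, smul_zero, zero_smul, add_zero, zero_add, sub_zero, map_zero, LinearMap.zero_apply] at hstar
  rw [hεval, hμval] at hstar
  have hq : η • (K w0 w) = (η * (lam1 * η / 2) - 2 * η * c) • w := by
    linear_combination (norm := module) -hstar
  have hKw0w : K w0 w = (lam1 * η / 2 - 2 * c) • w := by
    have h4 : η • (K w0 w) = η • ((lam1 * η / 2 - 2 * c) • w) := by
      rw [hq, smul_smul]; congr 1; ring
    exact smul_right_injective V (ne_of_gt hηpos) h4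
  -- final step
  have hfin := hpar v w v v
  simp only [Rc] at hfin
  simp only [hKvv, map_add, map_sub, map_smul, LinearMap.add_apply, LinearMap.sub_apply,
    LinearMap.smul_apply, inner_add_right, inner_add_left, inner_sub_left, inner_sub_right,
    real_inner_smul_left, real_inner_smul_right, hK11, hK1v, hKv1, hK1w0, hKw01, hKw0v,
    hK1w, hKw1, hKwv, hc, hK1u, hKu1, hKvw0, hKww0, hKw0w,
    he1i, hv1, hv1', hvv, hw01, hw01', hw0v, hw0v', hw1, hw1', hvw, hvw', hu1, hu1',
    hvu0, hvu0', hww0, hww0', smul_add, smul_sub, smul_smul,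
    mul_one, mul_zero, zero_mul, smul_zero, zero_smul, add_zero, zero_add, sub_zero, map_zero, LinearMap.zero_apply] at hfin
  rw [hεval] at hfin
  have h8 : (8 * c - 2 * η ^ 2 - lam1 * η) • (K v w) = 0 := by
    linear_combination (norm := module) hfin
  rcases smul_eq_zero.mp h8 with h | h
  · right; rw [hτ]; linear_combination h / 8
  · left
    have hcw : c • w = 0 := by rw [← hc, h, map_zero]
    rcases smul_eq_zero.mp hcw with h' | h'
    · exact h'
    · exact absurd h' hwne

end
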